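/- Let (K,v) be a valued field of characteristic p > 0 with M_v ⊆ {x^p - x : x ∈ K}. Let L = K(a) be an immediate Galois extension of degree p with a^p - a = b ∈ K, and let ṽ be an extension of v to L. Then the set C = {v(x^p - x - b) : x ∈ K} is contained in the strictly negative part of the value group and has no greatest element. -/

import Mathlib

section Aux

variable {p : ℕ} {K L : Type} [Field K] [Field L] [Algebra K L]

/-- roots of `X^p = X` in a field of char `p` lie in the prime field, hence
in the image of any subfield. -/
lemma fixed_mem_range (hp : p.Prime) [CharP K p] (c : L) (hc : c ^ p = c) :
    ∃ t : K, algebraMap K L t = c := by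
  classical
  haveI : CharP L p := charP_of_injective_algebraMap (algebraMap K L).injective p
  haveI : Fact p.Prime := ⟨hp⟩
  set f : Polynomial L := Polynomial.X ^ p - Polynomial.X with hf
  have hpgt : 1 < p := hp.one_lt
  have hdeg : f.natDegree = p := by
    rw [hf]
    compute_degree!
    · rw [if_neg (by omega : ¬ (1 = p))]
      simp
    · omega
  have hf0 : f ≠ 0 := by
    intro h
    rw [h, Polynomial.natDegree_zero] at hdeg
    omega
  set φ : ZMod p →+* L := ZMod.castHom (dvd_refl p) L with hφ
  have hinj : Function.Injective φ := φ.injective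
  have hroot : ∀ i : ZMod p, φ i ∈ f.roots := by
    intro i
    rw [Polynomial.mem_roots hf0]
    simp only [f, Polynomial.IsRoot, Polynomial.eval_sub, Polynomial.eval_pow,
      Polynomial.eval_X]
    rw [← map_pow, ZMod.pow_card, sub_self]
  have hsub : (Finset.univ.image φ : Finset L) ⊆ f.roots.toFinset := by
    intro x hx
    simp only [Finset.mem_image] at hx
    obtain ⟨i, -, rfl⟩ := hx
    simpa using hroot i
  have hcardroots : f.roots.toFinset.card ≤ p := by
    calc f.roots.toFinset.card ≤ Multiset.card f.roots := f.roots.toFinset_card_le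
    _ ≤ f.natDegree := f.card_roots'
    _ = p := hdeg
  have hcardim : (Finset.univ.image φ : Finset L).card = p := by
    rw [Finset.card_image_of_injective _ hinj, Finset.card_univ, ZMod.card]
  have heq : (Finset.univ.image φ : Finset L) = f.roots.toFinset :=
    Finset.eq_of_subset_of_card_le hsub (by omega)
  have hcmem : c ∈ f.roots.toFinset := by
    simp only [Multiset.mem_toFinset]
    rw [Polynomial.mem_roots hf0]
    simp [f, Polynomial.IsRoot, hc]
  rw [← heq] at hcmem
  simp only [Finset.mem_image] at hcmem
  obtain ⟨i, -, hi⟩ := hcmem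
  refine ⟨(ZMod.castHom (dvd_refl p) K) i, ?_⟩
  have : (algebraMap K L).comp (ZMod.castHom (dvd_refl p) K) = φ := RingHom.ext_zmod _ _
  rw [← this] at hi
  exact hi

end Aux

theorem set_C_neg_and_no_last_element
    (p : ℕ) (hp : p.Prime) (K L : Type) [Field K] [Field L] [Algebra K L]
    [CharP K p] [FiniteDimensional K L] [IsGalois K L]
    (hdeg : Module.finrank K L = p)
    {Γ : Type} [LinearOrderedCommGroupWithZero Γ]
    (v : Valuation K Γ) (w : Valuation L Γ)
    (hext : ∀ x : K, w (algebraMap K L x) = v x)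
    -- the extension is immediate: same value group and same residue field
    (himmval : ∀ y : L, y ≠ 0 → ∃ x : K, w y = v x)
    (himmres : ∀ y : L, w y ≤ 1 → ∃ x : K, v x ≤ 1 ∧ w (y - algebraMap K L x) < 1)
    (hM : ∀ m : K, v m < 1 → ∃ x : K, x ^ p - x = m)
    (a : L) (b : K) (hgen : Algebra.adjoin K {a} = ⊤)
    (hab : a ^ p - a = algebraMap K L b) :
    (∀ γ ∈ {γ : Γ | ∃ x : K, v (x ^ p - x - b) = γ}, 1 < γ) ∧
      (∀ γ ∈ {γ : Γ | ∃ x : K, v (x ^ p - x - b) = γ},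
        ∃ γ' ∈ {γ : Γ | ∃ x : K, v (x ^ p - x - b) = γ}, γ' < γ) := by
  haveI : CharP L p := charP_of_injective_algebraMap (algebraMap K L).injective p
  haveI : Fact p.Prime := ⟨hp⟩
  set β := algebraMap K L with hβ
  have hp1 : 1 < p := hp.one_lt
  have hp0 : p ≠ 0 := hp.ne_zero
  -- `a` is not in the image of `K`
  have ha : ∀ t : K, β t ≠ a := by
    intro t ht
    have hbot : a ∈ (⊥ : Subalgebra K L) := by
      rw [Algebra.mem_bot]; exact ⟨t, ht⟩
    have : Algebra.adjoin K {a} ≤ ⊥ := by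
      rw [Algebra.adjoin_le_iff]; simpa [Algebra.mem_bot] using hbot
    have hbt : (⊥ : Subalgebra K L) = ⊤ := le_antisymm le_top (hgen ▸ this)
    have := Subalgebra.bot_eq_top_iff_finrank_eq_one.mp hbt
    rw [hdeg] at this
    exact hp.one_lt.ne' this
  -- the key algebraic identity
  have key : ∀ x : K, (β x - a) ^ p - (β x - a) = β (x ^ p - x - b) := by
    intro x
    rw [sub_pow_char]
    have : (β x) ^ p - a ^ p - (β x - a) = (β x) ^ p - β x - (a ^ p - a) := by ring
    rw [this, hab]
    push_cast [map_sub, map_pow]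
    ring
  -- if the constant term has valuation ≤ 1 we reach a contradiction
  have main : ∀ x : K, 1 < v (x ^ p - x - b) := by
    intro x
    by_contra hle
    push_neg at hle
    set c := β x - a with hc
    have hcpc : c ^ p - c = β (x ^ p - x - b) := key x
    have hwc : w c ≤ 1 := by
      by_contra hgt
      push_neg at hgt
      have h1 : w c < w (c ^ p) := by
        rw [Valuation.map_pow]
        exact lt_self_pow₀ hgt hp1
      have : w (c ^ p - c) = w (c ^ p) := Valuation.map_sub_eq_of_lt_left _ h1
      rw [hcpc, hext] at this
      rw [this] at hle
      have : 1 < w (c ^ p) := by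
        rw [Valuation.map_pow]
        exact one_lt_pow₀ hgt hp0
      exact absurd hle (not_le.mpr this)
    obtain ⟨y, hy1, hy2⟩ := himmres c hwc
    set c₁ := c - β y with hc₁
    have hc₁pc : c₁ ^ p - c₁ = β ((x - y) ^ p - (x - y) - b) := by
      rw [hc₁, hc, show β x - a - β y = β (x - y) - a by rw [map_sub]; ring]
      exact key (x - y)
    have hwc₁ : w c₁ < 1 := hy2
    have hm' : v ((x - y) ^ p - (x - y) - b) < 1 := by
      rw [← hext, ← hc₁pc]
      calc w (c₁ ^ p - c₁) ≤ max (w (c₁ ^ p)) (w c₁) := Valuation.map_sub _ _ _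
      _ < 1 := by
        rw [max_lt_iff, Valuation.map_pow]
        exact ⟨pow_lt_one₀ zero_le' hwc₁ hp0, hwc₁⟩
    obtain ⟨z, hz⟩ := hM _ hm'
    have hfix : (c₁ - β z) ^ p = c₁ - β z := by
      have : (c₁ - β z) ^ p - (c₁ - β z) = c₁ ^ p - c₁ - (β z ^ p - β z) := by
        rw [sub_pow_char (R := L) c₁ (β z)]; ring
      rw [hc₁pc, ← map_pow, ← map_sub, ← map_sub, hz] at this
      have h0 : ((x - y) ^ p - (x - y) - b - ((x - y) ^ p - (x - y) - b)) = 0 := by ring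
      rw [h0, map_zero, sub_eq_zero] at this
      exact this
    obtain ⟨t, ht⟩ := fixed_mem_range (K := K) hp (c₁ - β z) hfix
    apply ha (x - y - z - t)
    have : β t = β x - a - β y - β z := by rw [ht, hc₁, hc]
    rw [map_sub, map_sub, map_sub, this]
    ring
  constructor
  · rintro γ ⟨x, rfl⟩
    exact main x
  · rintro γ ⟨x, rfl⟩
    set c := β x - a with hc
    have hcpc : c ^ p - c = β (x ^ p - x - b) := key x
    have hγ : 1 < v (x ^ p - x - b) := main x
    have hwc : 1 < w c := by
      by_contra hle
      push_neg at hle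
      have : w (c ^ p - c) ≤ 1 := by
        calc w (c ^ p - c) ≤ max (w (c ^ p)) (w c) := Valuation.map_sub _ _ _
        _ ≤ 1 := by
          rw [max_le_iff, Valuation.map_pow]
          exact ⟨pow_le_one₀ zero_le' hle, hle⟩
      rw [hcpc, hext] at this
      exact absurd this (not_le.mpr hγ)
    have hwcp : w (c ^ p - c) = (w c) ^ p := by
      have h1 : w c < w (c ^ p) := by
        rw [Valuation.map_pow]; exact lt_self_pow₀ hwc hp1
      rw [Valuation.map_sub_eq_of_lt_left _ h1, Valuation.map_pow]
    have hγeq : v (x ^ p - x - b) = (w c) ^ p := by rw [← hext, ← hcpc, hwcp]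
    -- get `y ∈ K` with `v y = w c`
    have hc0 : c ≠ 0 := by
      intro h0
      rw [h0] at hwc
      simp at hwc
    obtain ⟨y, hy⟩ := himmval c hc0
    have hvy : v y = w c := hy.symm
    have hy0 : (y : K) ≠ 0 := by
      intro h0
      rw [h0, map_zero] at hvy
      rw [← hvy] at hwc
      exact not_lt_of_ge zero_le_one hwc
    have hβy0 : β y ≠ 0 := by
      simpa using (map_ne_zero β).mpr hy0
    have hwu : w (c * (β y)⁻¹) ≤ 1 := by
      rw [Valuation.map_mul, map_inv₀, hext, hvy,
        mul_inv_cancel₀ (zero_lt_one.trans hwc).ne']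
    obtain ⟨u, hu1, hu2⟩ := himmres (c * (β y)⁻¹) hwu
    set d := y * u with hd
    have hcd : w (c - β d) < w c := by
      have heq2 : β y * (c * (β y)⁻¹ - β u) = c - β d := by
        rw [mul_sub, hd, map_mul, mul_comm c (β y)⁻¹, ← mul_assoc,
          mul_inv_cancel₀ hβy0, one_mul]
      rw [← heq2, Valuation.map_mul, hext, hvy]
      calc w c * w (c * (β y)⁻¹ - β u) < w c * 1 :=
            mul_lt_mul_of_pos_left hu2 (zero_lt_one.trans hwc)
      _ = w c := mul_one _
    -- the new element
    refine ⟨v ((x - d) ^ p - (x - d) - b), ⟨x - d, rfl⟩, ?_⟩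
    have hc' : β (x - d) - a = c - β d := by rw [map_sub, hc]; ring
    have hkey' : (c - β d) ^ p - (c - β d) = β ((x - d) ^ p - (x - d) - b) := by
      rw [← hc']; exact key (x - d)
    have hwcd_lt : w (c - β d) < (w c) ^ p := lt_of_lt_of_le hcd (le_self_pow₀ hwc.le hp0)
    have hwcdp_lt : w ((c - β d) ^ p) < (w c) ^ p := by
      rw [Valuation.map_pow]
      exact pow_lt_pow_left₀ hcd zero_le' hp0
    rw [hγeq, ← hext, ← hkey']
    calc w ((c - β d) ^ p - (c - β d)) ≤ max (w ((c - β d) ^ p)) (w (c - β d)) :=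
          Valuation.map_sub _ _ _
    _ < (w c) ^ p := max_lt hwcdp_lt hwcd_lt
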